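/- Let N and M be 2×2 real matrices with det N = 1, and suppose u₁, u₂ ∈ ℝ² satisfy N·u₁ = λ₁u₁ and N·u₂ = λ₂u₂ with λ₁λ₂ = 1. Then for all integers m ≥ 1 and 1 ≤ j ≤ m: det[ N^{m−j}·M·N^{j−1}·u₂ | u₁ ] = λ₂^{m−1}·det[ M·u₂ | u₁ ] and det[ N^{m−j}·M·N^{j−1}·u₁ | u₂ ] = λ₁^{m−1}·det[ M·u₁ | u₂ ]. -/

import Mathlib

/-- `det[v | w]`: the determinant of the 2×2 matrix with columns `v` and `w`. -/
def detCols (v w : Fin 2 → ℝ) : ℝ := Matrix.det !![v 0, w 0; v 1, w 1]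

lemma detCols_smul_left (c : ℝ) (v w : Fin 2 → ℝ) :
    detCols (c • v) w = c * detCols v w := by
  simp [detCols, Matrix.det_fin_two]; ring

lemma detCols_smul_right (c : ℝ) (v w : Fin 2 → ℝ) :
    detCols v (c • w) = c * detCols v w := by
  simp [detCols, Matrix.det_fin_two]; ring

lemma detCols_mulVec (N : Matrix (Fin 2) (Fin 2) ℝ) (v w : Fin 2 → ℝ) :
    detCols (N.mulVec v) (N.mulVec w) = N.det * detCols v w := by
  simp [detCols, Matrix.det_fin_two, Matrix.mulVec, dotProduct, Fin.sum_univ_two]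
  ring

lemma pow_mulVec_eig (N : Matrix (Fin 2) (Fin 2) ℝ) (u : Fin 2 → ℝ) (l : ℝ)
    (h : N.mulVec u = l • u) (k : ℕ) : (N ^ k).mulVec u = l ^ k • u := by
  induction k with
  | zero => simp
  | succ n ih =>
      rw [pow_succ, ← Matrix.mulVec_mulVec, h, Matrix.mulVec_smul, ih, smul_smul,
        pow_succ, mul_comm]

lemma key (N M : Matrix (Fin 2) (Fin 2) ℝ) (hN : N.det = 1)
    (u₁ u₂ : Fin 2 → ℝ) (l₁ l₂ : ℝ)
    (h1 : N.mulVec u₁ = l₁ • u₁) (h2 : N.mulVec u₂ = l₂ • u₂) (hl : l₁ * l₂ = 1)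
    (a b : ℕ) :
    detCols ((N ^ a * M * N ^ b).mulVec u₂) u₁ = l₂ ^ (a + b) * detCols (M.mulVec u₂) u₁ := by
  have hl1 : l₁ ≠ 0 := left_ne_zero_of_mul_eq_one hl
  have hinv : l₂ = l₁⁻¹ := by field_simp; linarith [hl, mul_comm l₁ l₂]
  have step : (N ^ a * M * N ^ b).mulVec u₂ = l₂ ^ b • (N ^ a).mulVec (M.mulVec u₂) := by
    rw [Matrix.mul_assoc, ← Matrix.mulVec_mulVec, ← Matrix.mulVec_mulVec,
      pow_mulVec_eig N u₂ l₂ h2 b, Matrix.mulVec_smul, Matrix.mulVec_smul]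
  rw [step, detCols_smul_left]
  have main : detCols ((N ^ a).mulVec (M.mulVec u₂)) u₁
      = l₂ ^ a * detCols (M.mulVec u₂) u₁ := by
    have := detCols_mulVec (N ^ a) (M.mulVec u₂) u₁
    rw [Matrix.det_pow, hN, one_pow, one_mul, pow_mulVec_eig N u₁ l₁ h1 a,
      detCols_smul_right] at this
    have hla : l₁ ^ a ≠ 0 := pow_ne_zero _ hl1
    field_simp [hinv] at this ⊢
    have e : l₁ ^ a * l₂ ^ a = 1 := by rw [← mul_pow, hl, one_pow]
    linear_combination (l₂ ^ a) * this - detCols ((N ^ a).mulVec (M.mulVec u₂)) u₁ * e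
  rw [main]; ring

theorem first_order_term_determinants (N M : Matrix (Fin 2) (Fin 2) ℝ) (hN : N.det = 1)
    (u₁ u₂ : Fin 2 → ℝ) (l₁ l₂ : ℝ)
    (h1 : N.mulVec u₁ = l₁ • u₁) (h2 : N.mulVec u₂ = l₂ • u₂) (hl : l₁ * l₂ = 1)
    (m j : ℕ) (hm : 1 ≤ m) (hj1 : 1 ≤ j) (hjm : j ≤ m) :
    detCols ((N ^ (m - j) * M * N ^ (j - 1)).mulVec u₂) u₁
        = l₂ ^ (m - 1) * detCols (M.mulVec u₂) u₁ ∧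
    detCols ((N ^ (m - j) * M * N ^ (j - 1)).mulVec u₁) u₂
        = l₁ ^ (m - 1) * detCols (M.mulVec u₁) u₂ := by
  have harith : (m - j) + (j - 1) = m - 1 := by omega
  constructor
  · rw [key N M hN u₁ u₂ l₁ l₂ h1 h2 hl, harith]
  · rw [key N M hN u₂ u₁ l₂ l₁ h2 h1 (by linarith [mul_comm l₁ l₂]), harith]
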